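/- Let N ≥ 1 and let r ≥ 2 be a real number. Then there exists a constant C > 0 (depending only on r and N) such that for all X, Y ∈ ℝ^N and all real a, b > 0, setting Φ = (1 + (r−1)(b/a)^r) X − r (b/a)^{r−1} Y and Ψ = (1 + (r−1)(a/b)^r) Y − r (a/b)^{r−1} X, one has ‖X‖^{r−2}⟨X, Φ⟩ + ‖Y‖^{r−2}⟨Y, Ψ⟩ ≥ C ‖bX − aY‖^r (a^{−r} + b^{−r}), where ⟨·,·⟩ is the Euclidean inner product and ‖·‖ the Euclidean norm, with the convention that ‖v‖^{r−2}⟨v, w⟩ = 0 whenever v = 0. -/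

import Mathlib

open Real

variable {E : Type*} [NormedAddCommGroup E] [InnerProductSpace ℝ E]

local notation "⟪" x ", " y "⟫" => @inner ℝ _ _ x y

private lemma rpow_bridge2 {x : ℝ} (hx : 0 ≤ x) {r : ℝ} (hr : 2 ≤ r) :
    x ^ (r - 2) * (x * x) = x ^ r := by
  have h2 : x * x = x ^ (2 : ℝ) := by
    rw [Real.rpow_two]; ring
  rw [h2, ← Real.rpow_add' hx (by linarith : r - 2 + 2 ≠ 0)]
  ring_nf

private lemma rpow_bridge1 {x : ℝ} (hx : 0 ≤ x) {r : ℝ} (hr : 2 ≤ r) :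
    x ^ (r - 2) * x = x ^ (r - 1) := by
  nth_rewrite 2 [show x = x ^ (1 : ℝ) by rw [Real.rpow_one]]
  rw [← Real.rpow_add' hx (by linarith : r - 2 + 1 ≠ 0)]
  ring_nf

/-- scalar Young/Bernoulli type inequality -/
private lemma youngish {r x y : ℝ} (hr : 2 ≤ r) (hx : 0 ≤ x) (hy : 0 ≤ y) :
    r * y ^ (r - 1) * x ≤ x ^ r + (r - 1) * y ^ r := by
  rcases eq_or_lt_of_le hy with h | hy
  · rw [← h, Real.zero_rpow (by linarith : r - 1 ≠ 0), Real.zero_rpow (by linarith : r ≠ 0)]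
    have : 0 ≤ x ^ r := Real.rpow_nonneg hx r
    nlinarith
  · have hb := one_add_mul_self_le_rpow_one_add
      (by have := div_nonneg hx hy.le; linarith : -1 ≤ x / y - 1)
      (by linarith : 1 ≤ r)
    have hxy : 1 + (x / y - 1) = x / y := by ring
    rw [hxy] at hb
    have hdiv : (x / y) ^ r = x ^ r / y ^ r := Real.div_rpow hx hy.le r
    rw [hdiv] at hb
    have hyr : 0 < y ^ r := Real.rpow_pos_of_pos hy r
    have hy1 : y ^ (r - 1) = y ^ r / y := Real.rpow_sub_one hy.ne' r
    have hb2 : (1 + r * (x / y - 1)) * y ^ r ≤ x ^ r := by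
      have := mul_le_mul_of_nonneg_right hb hyr.le
      rwa [div_mul_cancel₀ _ hyr.ne'] at this
    have hexp : (1 + r * (x / y - 1)) * y ^ r = y ^ r + r * (y ^ r / y) * x - r * y ^ r := by
      field_simp
      ring
    rw [hexp] at hb2
    rw [hy1]
    linarith

/-- nonnegativity of the Bregman bracket -/
private lemma bregman_nonneg {r : ℝ} (hr : 2 ≤ r) (P Q : E) :
    0 ≤ ‖P‖ ^ r + (r - 1) * ‖Q‖ ^ r - r * ‖Q‖ ^ (r - 2) * ⟪Q, P⟫ := by
  have h1 : ⟪Q, P⟫ ≤ ‖Q‖ * ‖P‖ := real_inner_le_norm Q P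
  have h2 : (0:ℝ) ≤ r * ‖Q‖ ^ (r - 2) := by positivity
  have h3 : r * ‖Q‖ ^ (r - 2) * ⟪Q, P⟫ ≤ r * ‖Q‖ ^ (r - 2) * (‖Q‖ * ‖P‖) := by
    exact mul_le_mul_of_nonneg_left h1 h2
  have h4 : r * ‖Q‖ ^ (r - 2) * (‖Q‖ * ‖P‖) = r * ‖Q‖ ^ (r - 1) * ‖P‖ := by
    rw [← rpow_bridge1 (norm_nonneg Q) hr]; ring
  have h5 := youngish hr (norm_nonneg P) (norm_nonneg Q)
  linarith [h3, h4 ▸ h3, h5]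

set_option maxHeartbeats 1000000 in
/-- monotonicity estimate for the pair -/
private lemma mono_pair {r : ℝ} (hr : 2 ≤ r) (M Q : E) :
    (2:ℝ) ^ (2 - r) * ‖M - Q‖ ^ r ≤
      2 * (‖M‖ ^ (r - 2) * (‖M‖ * ‖M‖) + ‖Q‖ ^ (r - 2) * (‖Q‖ * ‖Q‖)
        - (‖M‖ ^ (r - 2) + ‖Q‖ ^ (r - 2)) * ⟪M, Q⟫) := by
  set α := ‖M‖ ^ (r - 2) with hα
  set β := ‖Q‖ ^ (r - 2) with hβ
  have hα0 : 0 ≤ α := Real.rpow_nonneg (norm_nonneg M) _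
  have hβ0 : 0 ≤ β := Real.rpow_nonneg (norm_nonneg Q) _
  have hns : ‖M - Q‖ * ‖M - Q‖ = ‖M‖ * ‖M‖ - 2 * ⟪M, Q⟫ + ‖Q‖ * ‖Q‖ := by
    have := norm_sub_sq_real M Q
    nlinarith [this]
  have hsign : 0 ≤ (α - β) * (‖M‖ * ‖M‖ - ‖Q‖ * ‖Q‖) := by
    rcases le_total ‖M‖ ‖Q‖ with h | h
    · have e1 : α ≤ β := Real.rpow_le_rpow (norm_nonneg M) h (by linarith)
      nlinarith [e1, mul_self_le_mul_self (norm_nonneg M) h]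
    · have e1 : β ≤ α := Real.rpow_le_rpow (norm_nonneg Q) h (by linarith)
      nlinarith [e1, mul_self_le_mul_self (norm_nonneg Q) h]
  have hsum : (2:ℝ) ^ (2 - r) * ‖M - Q‖ ^ (r - 2) ≤ α + β := by
    rcases le_total ‖M‖ ‖Q‖ with h | h
    · have h1 : ‖M - Q‖ ≤ 2 * ‖Q‖ := by
        have := norm_sub_le M Q; linarith
      have h2 : ‖M - Q‖ ^ (r - 2) ≤ (2 * ‖Q‖) ^ (r - 2) :=
        Real.rpow_le_rpow (norm_nonneg _) h1 (by linarith)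
      have h3 : (2 * ‖Q‖) ^ (r - 2) = (2:ℝ) ^ (r - 2) * β :=
        Real.mul_rpow (by norm_num) (norm_nonneg Q)
      have h4 : (2:ℝ) ^ (2 - r) * (2:ℝ) ^ (r - 2) = 1 := by
        rw [← Real.rpow_add (by norm_num : (0:ℝ) < 2)]; norm_num
      calc (2:ℝ) ^ (2 - r) * ‖M - Q‖ ^ (r - 2)
          ≤ (2:ℝ) ^ (2 - r) * ((2:ℝ) ^ (r - 2) * β) := by
            rw [← h3]
            exact mul_le_mul_of_nonneg_left h2 (by positivity)
        _ = β := by rw [← mul_assoc, h4, one_mul]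
        _ ≤ α + β := by linarith
    · have h1 : ‖M - Q‖ ≤ 2 * ‖M‖ := by
        have := norm_sub_le M Q; linarith
      have h2 : ‖M - Q‖ ^ (r - 2) ≤ (2 * ‖M‖) ^ (r - 2) :=
        Real.rpow_le_rpow (norm_nonneg _) h1 (by linarith)
      have h3 : (2 * ‖M‖) ^ (r - 2) = (2:ℝ) ^ (r - 2) * α :=
        Real.mul_rpow (by norm_num) (norm_nonneg M)
      have h4 : (2:ℝ) ^ (2 - r) * (2:ℝ) ^ (r - 2) = 1 := by
        rw [← Real.rpow_add (by norm_num : (0:ℝ) < 2)]; norm_num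
      calc (2:ℝ) ^ (2 - r) * ‖M - Q‖ ^ (r - 2)
          ≤ (2:ℝ) ^ (2 - r) * ((2:ℝ) ^ (r - 2) * α) := by
            rw [← h3]
            exact mul_le_mul_of_nonneg_left h2 (by positivity)
        _ = α := by rw [← mul_assoc, h4, one_mul]
        _ ≤ α + β := by linarith
  have hbr : ‖M - Q‖ ^ (r - 2) * (‖M - Q‖ * ‖M - Q‖) = ‖M - Q‖ ^ r :=
    rpow_bridge2 (norm_nonneg _) hr
  have hkey : (2:ℝ) ^ (2 - r) * ‖M - Q‖ ^ r ≤ (α + β) * (‖M - Q‖ * ‖M - Q‖) := by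
    rw [← hbr, ← mul_assoc]
    exact mul_le_mul_of_nonneg_right hsum (by positivity)
  nlinarith [hkey, hsign, hns]

set_option maxHeartbeats 1000000 in
/-- strong convexity of the Bregman bracket -/
private lemma bregman_strong {r : ℝ} (hr : 2 ≤ r) (P Q : E) :
    (2:ℝ) ^ (1 - 2 * r) * ‖P - Q‖ ^ r ≤
      ‖P‖ ^ r + (r - 1) * ‖Q‖ ^ r - r * ‖Q‖ ^ (r - 2) * ⟪Q, P⟫ := by
  set M : E := (2:ℝ)⁻¹ • (P + Q) with hM
  have hPM : P - M = (2:ℝ)⁻¹ • (P - Q) := by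
    rw [hM]; module
  have hMQ : M - Q = (2:ℝ)⁻¹ • (P - Q) := by
    rw [hM]; module
  have hnMQ : ‖M - Q‖ = 2⁻¹ * ‖P - Q‖ := by
    rw [hMQ, norm_smul]; norm_num
  -- the three Bregman brackets
  have h1 := bregman_nonneg hr P M
  have h2 := bregman_nonneg hr M Q
  -- identity: B' P Q = B' P M + B' M Q + G
  have hMr : ‖M‖ ^ r = ‖M‖ ^ (r - 2) * ⟪M, M⟫ := by
    rw [real_inner_self_eq_norm_mul_norm, rpow_bridge2 (norm_nonneg M) hr]
  have hinnerM : ⟪M, P⟫ - ⟪M, M⟫ = ⟪M, M⟫ - ⟪M, Q⟫ := by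
    have e1 : ⟪M, P - M⟫ = ⟪M, P⟫ - ⟪M, M⟫ := by rw [inner_sub_right]
    have e2 : ⟪M, M - Q⟫ = ⟪M, M⟫ - ⟪M, Q⟫ := by rw [inner_sub_right]
    rw [← e1, ← e2, hPM, hMQ]
  have hinnerQ : ⟪Q, P⟫ - ⟪Q, M⟫ = ⟪Q, M⟫ - ⟪Q, Q⟫ := by
    have e1 : ⟪Q, P - M⟫ = ⟪Q, P⟫ - ⟪Q, M⟫ := by rw [inner_sub_right]
    have e2 : ⟪Q, M - Q⟫ = ⟪Q, M⟫ - ⟪Q, Q⟫ := by rw [inner_sub_right]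
    rw [← e1, ← e2, hPM, hMQ]
  set α := ‖M‖ ^ (r - 2) with hα
  set β := ‖Q‖ ^ (r - 2) with hβ
  have hident : ‖P‖ ^ r + (r - 1) * ‖Q‖ ^ r - r * β * ⟪Q, P⟫
      = (‖P‖ ^ r + (r - 1) * ‖M‖ ^ r - r * α * ⟪M, P⟫)
      + (‖M‖ ^ r + (r - 1) * ‖Q‖ ^ r - r * β * ⟪Q, M⟫)
      + r * (α * (⟪M, M⟫ - ⟪M, Q⟫) - β * (⟪Q, M⟫ - ⟪Q, Q⟫)) := by
    have e3 : α * (⟪M, M⟫ - ⟪M, Q⟫) = α * (⟪M, P⟫ - ⟪M, M⟫) := by rw [← hinnerM]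
    have e4 : β * (⟪Q, M⟫ - ⟪Q, Q⟫) = β * (⟪Q, P⟫ - ⟪Q, M⟫) := by rw [← hinnerQ]
    rw [e3, e4, hMr]
    ring
  -- lower bound for G using mono_pair
  have hmp := mono_pair hr M Q
  have hQr : ‖Q‖ ^ (r - 2) * (‖Q‖ * ‖Q‖) = β * ⟪Q, Q⟫ := by
    rw [real_inner_self_eq_norm_mul_norm]
  have hMr2 : ‖M‖ ^ (r - 2) * (‖M‖ * ‖M‖) = α * ⟪M, M⟫ := by
    rw [real_inner_self_eq_norm_mul_norm]
  have hQM : ⟪Q, M⟫ = ⟪M, Q⟫ := real_inner_comm M Q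
  have hG : (2:ℝ) ^ (2 - r) * ‖M - Q‖ ^ r
      ≤ 2 * (α * (⟪M, M⟫ - ⟪M, Q⟫) - β * (⟪Q, M⟫ - ⟪Q, Q⟫)) := by
    have := hmp
    rw [hQr, hMr2] at this
    rw [hQM]
    linarith [this]
  -- convert norms
  have hcnv : ‖M - Q‖ ^ r = (2:ℝ) ^ (-r) * ‖P - Q‖ ^ r := by
    rw [hnMQ, Real.mul_rpow (by norm_num) (norm_nonneg _)]
    congr 1
    rw [Real.inv_rpow (by norm_num), ← Real.rpow_neg (by norm_num)]
  have hpow : (2:ℝ) ^ (2 - r) * (2:ℝ) ^ (-r) = (2:ℝ) ^ (2 - 2 * r) := by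
    rw [← Real.rpow_add (by norm_num : (0:ℝ) < 2)]
    ring_nf
  have hcst : (2:ℝ) ^ (1 - 2 * r) * 2 ≤ r / 2 * ((2:ℝ) ^ (2 - 2 * r)) * 2 := by
    have h21 : (2:ℝ) ^ (1 - 2*r) ≤ (2:ℝ) ^ (2 - 2*r) :=
      Real.rpow_le_rpow_of_exponent_le (by norm_num) (by linarith)
    have hr2 : (1:ℝ) ≤ r / 2 := by linarith
    nlinarith [Real.rpow_pos_of_pos (by norm_num : (0:ℝ) < 2) (2 - 2*r)]
  -- assemble
  have hGfin : (2:ℝ) ^ (1 - 2 * r) * ‖P - Q‖ ^ r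
      ≤ r / 2 * (2 * (α * (⟪M, M⟫ - ⟪M, Q⟫) - β * (⟪Q, M⟫ - ⟪Q, Q⟫))) := by
    have hD : 0 ≤ ‖P - Q‖ ^ r := Real.rpow_nonneg (norm_nonneg _) r
    have step1 : (2:ℝ) ^ (2 - 2 * r) * ‖P - Q‖ ^ r ≤ 2 * (α * (⟪M, M⟫ - ⟪M, Q⟫) - β * (⟪Q, M⟫ - ⟪Q, Q⟫)) := by
      calc (2:ℝ) ^ (2 - 2 * r) * ‖P - Q‖ ^ r
          = (2:ℝ) ^ (2 - r) * ((2:ℝ) ^ (-r) * ‖P - Q‖ ^ r) := by rw [← mul_assoc, hpow]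
        _ = (2:ℝ) ^ (2 - r) * ‖M - Q‖ ^ r := by rw [← hcnv]
        _ ≤ _ := hG
    have hr20 : (0:ℝ) < r / 2 := by linarith
    have step2 : r / 2 * ((2:ℝ) ^ (2 - 2*r) * ‖P - Q‖ ^ r)
        ≤ r / 2 * (2 * (α * (⟪M, M⟫ - ⟪M, Q⟫) - β * (⟪Q, M⟫ - ⟪Q, Q⟫))) :=
      mul_le_mul_of_nonneg_left step1 hr20.le
    have step3 : (2:ℝ) ^ (1 - 2 * r) * ‖P - Q‖ ^ r ≤ r / 2 * ((2:ℝ) ^ (2 - 2*r) * ‖P - Q‖ ^ r) := by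
      nlinarith [hcst, hD]
    linarith
  rw [hident]
  have hGexp : r * (α * (⟪M, M⟫ - ⟪M, Q⟫) - β * (⟪Q, M⟫ - ⟪Q, Q⟫))
      = r / 2 * (2 * (α * (⟪M, M⟫ - ⟪M, Q⟫) - β * (⟪Q, M⟫ - ⟪Q, Q⟫))) := by ring
  linarith [hGfin, h1, h2, hGexp]


set_option maxHeartbeats 1000000 in
/-- the Díaz–Saa regrouping identity -/
private lemma key_eq {r : ℝ} (hr : 2 ≤ r) {a b : ℝ} (ha : 0 < a) (hb : 0 < b) (P Q : E) :
    ‖a • P‖ ^ (r - 2) *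
        ⟪a • P, (1 + (r - 1) * (b / a) ^ r) • (a • P) - (r * (b / a) ^ (r - 1)) • (b • Q)⟫
      + ‖b • Q‖ ^ (r - 2) *
        ⟪b • Q, (1 + (r - 1) * (a / b) ^ r) • (b • Q) - (r * (a / b) ^ (r - 1)) • (a • P)⟫
    = a ^ r * (‖P‖ ^ r + (r - 1) * ‖Q‖ ^ r - r * ‖Q‖ ^ (r - 2) * ⟪Q, P⟫)
      + b ^ r * (‖Q‖ ^ r + (r - 1) * ‖P‖ ^ r - r * ‖P‖ ^ (r - 2) * ⟪P, Q⟫) := by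
  have hna : ‖a • P‖ ^ (r - 2) = a ^ (r - 2) * ‖P‖ ^ (r - 2) := by
    rw [norm_smul, Real.norm_eq_abs, abs_of_pos ha, Real.mul_rpow ha.le (norm_nonneg P)]
  have hnb : ‖b • Q‖ ^ (r - 2) = b ^ (r - 2) * ‖Q‖ ^ (r - 2) := by
    rw [norm_smul, Real.norm_eq_abs, abs_of_pos hb, Real.mul_rpow hb.le (norm_nonneg Q)]
  rw [hna, hnb]
  simp only [inner_sub_right, real_inner_smul_left, real_inner_smul_right]
  simp only [real_inner_self_eq_norm_mul_norm]
  rw [real_inner_comm P Q]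
  have hda : ((b / a) : ℝ) ^ r = b ^ r / a ^ r := Real.div_rpow hb.le ha.le r
  have hdb : ((a / b) : ℝ) ^ r = a ^ r / b ^ r := Real.div_rpow ha.le hb.le r
  have hda1 : ((b / a) : ℝ) ^ (r - 1) = (b ^ r / b) / (a ^ r / a) := by
    rw [Real.div_rpow hb.le ha.le, Real.rpow_sub_one hb.ne', Real.rpow_sub_one ha.ne']
  have hdb1 : ((a / b) : ℝ) ^ (r - 1) = (a ^ r / a) / (b ^ r / b) := by
    rw [Real.div_rpow ha.le hb.le, Real.rpow_sub_one ha.ne', Real.rpow_sub_one hb.ne']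
  have ha2 : a ^ (r - 2) = a ^ r / a / a := by
    rw [show r - 2 = r - 1 - 1 by ring, Real.rpow_sub_one ha.ne', Real.rpow_sub_one ha.ne']
  have hb2 : b ^ (r - 2) = b ^ r / b / b := by
    rw [show r - 2 = r - 1 - 1 by ring, Real.rpow_sub_one hb.ne', Real.rpow_sub_one hb.ne']
  rw [hda, hdb, hda1, hdb1, ha2, hb2,
    ← rpow_bridge2 (norm_nonneg P) hr, ← rpow_bridge2 (norm_nonneg Q) hr]
  have har : (a : ℝ) ^ r ≠ 0 := (Real.rpow_pos_of_pos ha r).ne'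
  have hbr : (b : ℝ) ^ r ≠ 0 := (Real.rpow_pos_of_pos hb r).ne'
  field_simp
  ring

theorem diaz_saa_coercivity_ge_two (N : ℕ) (hN : 1 ≤ N) (r : ℝ) (hr : 2 ≤ r) :
    ∃ C : ℝ, 0 < C ∧ ∀ X Y : EuclideanSpace ℝ (Fin N), ∀ a b : ℝ, 0 < a → 0 < b →
      ‖X‖ ^ (r - 2) *
          (inner ℝ X ((1 + (r - 1) * (b / a) ^ r) • X - (r * (b / a) ^ (r - 1)) • Y) : ℝ) +
        ‖Y‖ ^ (r - 2) *
          (inner ℝ Y ((1 + (r - 1) * (a / b) ^ r) • Y - (r * (a / b) ^ (r - 1)) • X) : ℝ) ≥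
      C * ‖b • X - a • Y‖ ^ r * (a ^ (-r) + b ^ (-r)) := by
  refine ⟨(2:ℝ) ^ (1 - 2 * r), Real.rpow_pos_of_pos (by norm_num) _, ?_⟩
  intro X Y a b ha hb
  set C := (2:ℝ) ^ (1 - 2 * r) with hC
  set P : EuclideanSpace ℝ (Fin N) := a⁻¹ • X with hP
  set Q : EuclideanSpace ℝ (Fin N) := b⁻¹ • Y with hQ
  have hX : X = a • P := by rw [hP, smul_inv_smul₀ ha.ne']
  have hY : Y = b • Q := by rw [hQ, smul_inv_smul₀ hb.ne']
  rw [ge_iff_le, hX, hY, key_eq hr ha hb P Q]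
  -- rewrite the right-hand side
  have hsub : b • (a • P) - a • (b • Q) = (a * b) • (P - Q) := by
    module
  have hnorm : ‖b • (a • P) - a • (b • Q)‖ ^ r = a ^ r * b ^ r * ‖P - Q‖ ^ r := by
    rw [hsub, norm_smul, Real.norm_eq_abs, abs_of_pos (mul_pos ha hb),
      Real.mul_rpow (mul_pos ha hb).le (norm_nonneg _), Real.mul_rpow ha.le hb.le]
  have hainv : a ^ (-r) = (a ^ r)⁻¹ := Real.rpow_neg ha.le r
  have hbinv : b ^ (-r) = (b ^ r)⁻¹ := Real.rpow_neg hb.le r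
  rw [hnorm, hainv, hbinv]
  have har : (0:ℝ) < a ^ r := Real.rpow_pos_of_pos ha r
  have hbr : (0:ℝ) < b ^ r := Real.rpow_pos_of_pos hb r
  have hRHS : C * (a ^ r * b ^ r * ‖P - Q‖ ^ r) * ((a ^ r)⁻¹ + (b ^ r)⁻¹)
      = C * ‖P - Q‖ ^ r * b ^ r + C * ‖P - Q‖ ^ r * a ^ r := by
    field_simp
  rw [hRHS]
  have hB1 := bregman_strong hr P Q
  have hB2 := bregman_strong hr Q P
  rw [norm_sub_rev Q P] at hB2
  rw [← hC] at hB1 hB2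
  nlinarith [mul_le_mul_of_nonneg_left hB1 har.le, mul_le_mul_of_nonneg_left hB2 hbr.le]
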